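/- Let 0 ≤ α < n and fix a globally biLipschitz homeomorphism Ω of ℝⁿ (quasicubes below are taken with respect to Ω). Let 𝔑 assign to each ordered pair of positive locally finite Borel measures on ℝⁿ a value in [0,∞], monotone in each argument: σ′ ≤ σ and ω′ ≤ ω imply 𝔑(σ′,ω′) ≤ 𝔑(σ,ω) (as holds for the two-weight operator norm of a fixed singular integral operator). Suppose there is C₀ > 0 such that √(A₂^α(σ′,ω′)) ≤ C₀ 𝔑(σ′,ω′) for every pair (σ′,ω′) of positive locally finite Borel measures having no common atoms. Then for every pair (σ,ω) of positive locally finite Borel measures on ℝⁿ, the punctured Muckenhoupt conditions hold: A₂^{α,punct}(σ,ω) + A₂^{α,*,punct}(σ,ω) ≤ 8 C₀² 𝔑(σ,ω)². -/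

import Mathlib

open MeasureTheory
open scoped ENNReal NNReal

noncomputable section

/-- An axis-parallel half-open cube in `ℝⁿ`, given by its corner `a` and side length `l`;
its image under a globally biLipschitz map `Ω` is a quasicube. -/
structure QCube (n : ℕ) where
  a : Fin n → ℝ
  l : ℝ

/-- The half-open cube as a subset of `ℝⁿ`. -/
def QCube.pts {n : ℕ} (Q : QCube n) : Set (EuclideanSpace ℝ (Fin n)) :=
  {x | ∀ i, Q.a i ≤ x i ∧ x i < Q.a i + Q.l}

/-- The set of common atoms `𝔓_{(σ,ω)}` of two measures. -/
def commonAtoms {n : ℕ} (σ ω : Measure (EuclideanSpace ℝ (Fin n))) :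
    Set (EuclideanSpace ℝ (Fin n)) :=
  {p | σ {p} ≠ 0 ∧ ω {p} ≠ 0}

/-- The classical Muckenhoupt constant `A₂^α(σ,ω)` over `Ω`-quasicubes. -/
def A2classical (n : ℕ) (α : ℝ) (Om : EuclideanSpace ℝ (Fin n) → EuclideanSpace ℝ (Fin n))
    (σ ω : Measure (EuclideanSpace ℝ (Fin n))) : ℝ≥0∞ :=
  ⨆ (Q : QCube n) (_ : 0 < Q.l),
    σ (Om '' Q.pts) * ω (Om '' Q.pts) / (volume (Om '' Q.pts)) ^ (2 * (1 - α / (n : ℝ)))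

/-- `μ(S, 𝔓_{(σ,ω)})`: the `μ`-measure of `S` with its largest common point mass removed. -/
def punctMass {n : ℕ} (σ ω μ : Measure (EuclideanSpace ℝ (Fin n)))
    (S : Set (EuclideanSpace ℝ (Fin n))) : ℝ≥0∞ :=
  μ S - ⨆ p ∈ S ∩ commonAtoms σ ω, μ {p}

/-- The punctured Muckenhoupt constant `A₂^{α,punct}(σ,ω)` over `Ω`-quasicubes. -/
def A2punct (n : ℕ) (α : ℝ) (Om : EuclideanSpace ℝ (Fin n) → EuclideanSpace ℝ (Fin n))
    (σ ω : Measure (EuclideanSpace ℝ (Fin n))) : ℝ≥0∞ :=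
  ⨆ (Q : QCube n) (_ : 0 < Q.l),
    punctMass σ ω ω (Om '' Q.pts) * σ (Om '' Q.pts)
      / (volume (Om '' Q.pts)) ^ (2 * (1 - α / (n : ℝ)))

/-- The dual punctured Muckenhoupt constant `A₂^{α,*,punct}(σ,ω)` over `Ω`-quasicubes. -/
def A2punctStar (n : ℕ) (α : ℝ) (Om : EuclideanSpace ℝ (Fin n) → EuclideanSpace ℝ (Fin n))
    (σ ω : Measure (EuclideanSpace ℝ (Fin n))) : ℝ≥0∞ :=
  ⨆ (Q : QCube n) (_ : 0 < Q.l),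
    punctMass σ ω σ (Om '' Q.pts) * ω (Om '' Q.pts)
      / (volume (Om '' Q.pts)) ^ (2 * (1 - α / (n : ℝ)))

section Aux

open Set Function

/-- Any countable set of atoms of finite total mass can be split into two parts whose
masses differ by at most the supremal single mass, with the larger part explicit. -/
lemma split_lemma {X : Type*} [MeasurableSpace X] [MeasurableSingletonClass X]
    (μ : Measure X) (P : Set X) (hc : P.Countable) (hfin : μ P ≠ ∞)
    (hpos : ∀ p ∈ P, μ {p} ≠ 0) {s : ℝ≥0∞} (hs : ∀ p ∈ P, μ {p} ≤ s) :
    ∃ E O : Set X, E ⊆ P ∧ O ⊆ P ∧ P ⊆ E ∪ O ∧ Disjoint E O ∧ μ O ≤ μ E ∧ μ E ≤ μ O + s := by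
  classical
  haveI := hc.to_subtype
  obtain ⟨e, he⟩ := exists_injective_nat ↥P
  set g : ↥P → ℝ≥0∞ := fun p => μ {(p : X)} with hg
  -- measure of an image of a set of indices as a tsum
  have hmeas : ∀ A : Set ↥P, μ (Subtype.val '' A) = ∑' q : A, g q.1 := by
    intro A
    have h1 : Subtype.val '' A = ⋃ q ∈ A, {(q : X)} := by
      ext x; simp [eq_comm]
    rw [h1, measure_biUnion (Set.to_countable A) ?_ (fun q _ => measurableSet_singleton _)]
    intro p _ q _ hpq
    simp only [Function.onFun]
    exact Set.disjoint_singleton.2 (fun h => hpq (Subtype.val_injective h))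
  have htsum : (∑' q : ↥P, g q) ≠ ∞ := by
    have h2 : μ P = ∑' q : ↥P, g q := by
      have := hmeas Set.univ
      rwa [Subtype.coe_image_univ, tsum_univ] at this
    rwa [← h2]
  -- the linear-order key
  set k : ↥P → (ℝ≥0∞ᵒᵈ ×ₗ ℕ) := fun p => toLex (OrderDual.toDual (g p), e p) with hk
  have hk_inj : Injective k := by
    intro p q h
    apply he
    have := congrArg (fun z => (ofLex z).2) h
    exact this
  have hklt : ∀ p q : ↥P, k p < k q → g q ≤ g p := by
    intro p q h
    rw [Prod.Lex.lt_iff] at h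
    rcases h with h | ⟨h, _⟩
    · exact le_of_lt h
    · exact le_of_eq (congrArg OrderDual.ofDual h).symm
  have hPrevFin : ∀ p : ↥P, {q : ↥P | k q < k p}.Finite := by
    intro p
    refine Set.Finite.subset
      (ENNReal.finite_const_le_of_tsum_ne_top htsum (hpos p.1 p.2)) ?_
    intro q hq
    exact hklt q p hq
  set rank : ↥P → ℕ := fun p => (hPrevFin p).toFinset.card with hrank
  have hrank_lt : ∀ p q : ↥P, k p < k q → rank p < rank q := by
    intro p q h
    apply Finset.card_lt_card
    rw [Set.Finite.toFinset_ssubset_toFinset]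
    constructor
    · exact fun r hr => lt_trans hr h
    · intro hsub
      exact absurd (hsub h) (lt_irrefl (k p))
  have hrank_inj : Injective rank := by
    intro p q h
    rcases lt_trichotomy (k p) (k q) with hlt | heq | hgt
    · exact absurd h (Nat.ne_of_lt (hrank_lt p q hlt))
    · exact hk_inj heq
    · exact absurd h.symm (Nat.ne_of_lt (hrank_lt q p hgt))
  have hpred : ∀ p : ↥P, rank p ≠ 0 → ∃ q : ↥P, rank p = rank q + 1 ∧ g p ≤ g q := by
    intro p hp
    have hne : {q : ↥P | k q < k p}.Nonempty := by
      rw [Set.nonempty_iff_ne_empty]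
      intro h0
      apply hp
      simp only [hrank]
      rw [Finset.card_eq_zero, Set.Finite.toFinset_eq_empty]
      exact h0
    obtain ⟨q, hqmem, hqmax⟩ :=
      Set.Finite.exists_maximalFor k _ (hPrevFin p) hne
    refine ⟨q, ?_, hklt q p hqmem⟩
    have hset : {r : ↥P | k r < k q} = {r : ↥P | k r < k p} \ {q} := by
      ext r
      simp only [Set.mem_setOf_eq, Set.mem_diff, Set.mem_singleton_iff]
      constructor
      · intro hr
        exact ⟨lt_trans hr hqmem, fun h => absurd hr (by rw [h]; exact lt_irrefl _)⟩
      · rintro ⟨hr, hrq⟩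
        rcases lt_trichotomy (k r) (k q) with h | h | h
        · exact h
        · exact absurd (hk_inj h) hrq
        · exact absurd (hqmax hr (le_of_lt h)) (not_le_of_gt h)
    have hins : {r : ↥P | k r < k p} = insert q {r : ↥P | k r < k q} := by
      rw [hset, Set.insert_diff_singleton, Set.insert_eq_of_mem hqmem]
    simp only [hrank]
    have : (hPrevFin p).toFinset = insert q (hPrevFin q).toFinset := by
      ext r
      simp only [Set.Finite.mem_toFinset, Finset.mem_insert, Set.Finite.mem_toFinset]
      rw [hins]; simp [Set.mem_insert_iff]
    rw [this, Finset.card_insert_of_notMem]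
    simp only [Set.Finite.mem_toFinset, Set.mem_setOf_eq]
    exact lt_irrefl _
  -- even and odd rank parts
  refine ⟨Subtype.val '' {p : ↥P | Even (rank p)}, Subtype.val '' {p : ↥P | ¬ Even (rank p)},
    ?_, ?_, ?_, ?_, ?_, ?_⟩
  · rintro x ⟨p, _, rfl⟩; exact p.2
  · rintro x ⟨p, _, rfl⟩; exact p.2
  · intro x hx
    rcases em (Even (rank ⟨x, hx⟩)) with h | h
    · exact Or.inl ⟨⟨x, hx⟩, h, rfl⟩
    · exact Or.inr ⟨⟨x, hx⟩, h, rfl⟩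
  · rw [Set.disjoint_left]
    rintro x ⟨p, hp, rfl⟩ ⟨q, hq, hqe⟩
    exact hq (by rw [Subtype.val_injective hqe]; exact hp)
  · -- μ O ≤ μ E
    rw [hmeas, hmeas]
    have hmap : ∀ q : {p : ↥P | ¬ Even (rank p)},
        ∃ r : {p : ↥P | Even (rank p)}, rank q.1 = rank r.1 + 1 ∧ g q.1 ≤ g r.1 := by
      rintro ⟨q, hq⟩
      have h0 : rank q ≠ 0 := fun h => hq (by rw [h]; exact Even.zero)
      obtain ⟨r, hr1, hr2⟩ := hpred q h0
      refine ⟨⟨r, ?_⟩, hr1, hr2⟩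
      simp only [Set.mem_setOf_eq] at hq ⊢
      rw [hr1, Nat.even_add_one] at hq
      exact not_not.mp hq
    choose i hi1 hi2 using hmap
    refine ENNReal.summable.tsum_le_tsum_of_inj i ?_ (fun _ _ => bot_le) (fun q => hi2 q)
      ENNReal.summable
    intro q q' h
    have hr : rank q.1 = rank q'.1 := by rw [hi1 q, hi1 q', h]
    exact Subtype.ext (hrank_inj hr)
  · -- μ E ≤ μ O + s
    have hsplit : Subtype.val '' {p : ↥P | Even (rank p)} =
        (Subtype.val '' {p : ↥P | Even (rank p) ∧ rank p = 0}) ∪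
        (Subtype.val '' {p : ↥P | Even (rank p) ∧ rank p ≠ 0}) := by
      have h0 : {p : ↥P | Even (rank p)} = {p : ↥P | Even (rank p) ∧ rank p = 0} ∪
          {p : ↥P | Even (rank p) ∧ rank p ≠ 0} := by
        ext p
        simp only [Set.mem_setOf_eq, Set.mem_union]
        constructor
        · intro h; by_cases hz : rank p = 0
          · exact Or.inl ⟨h, hz⟩
          · exact Or.inr ⟨h, hz⟩
        · rintro (⟨h, _⟩ | ⟨h, _⟩) <;> exact h
      rw [← Set.image_union, ← h0]
    have hzero : μ (Subtype.val '' {p : ↥P | Even (rank p) ∧ rank p = 0}) ≤ s := by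
      rcases Set.eq_empty_or_nonempty
          (Subtype.val '' {p : ↥P | Even (rank p) ∧ rank p = 0}) with h | ⟨x, hx⟩
      · rw [h]; simp
      · obtain ⟨p, hp, rfl⟩ := hx
        have hsub : Subtype.val '' {p : ↥P | Even (rank p) ∧ rank p = 0} ⊆ {(p : X)} := by
          rintro y ⟨q, hq, rfl⟩
          have : q = p := hrank_inj (by rw [hq.2, hp.2])
          rw [this]; rfl
        exact le_trans (measure_mono hsub) (hs p.1 p.2)
    have hposle : μ (Subtype.val '' {p : ↥P | Even (rank p) ∧ rank p ≠ 0}) ≤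
        μ (Subtype.val '' {p : ↥P | ¬ Even (rank p)}) := by
      rw [hmeas, hmeas]
      have hmap : ∀ q : {p : ↥P | Even (rank p) ∧ rank p ≠ 0},
          ∃ r : {p : ↥P | ¬ Even (rank p)}, rank q.1 = rank r.1 + 1 ∧ g q.1 ≤ g r.1 := by
        rintro ⟨q, hq1, hq2⟩
        obtain ⟨r, hr1, hr2⟩ := hpred q hq2
        refine ⟨⟨r, ?_⟩, hr1, hr2⟩
        simp only [Set.mem_setOf_eq]
        rw [hr1, Nat.even_add_one] at hq1
        exact hq1
      choose i hi1 hi2 using hmap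
      refine ENNReal.summable.tsum_le_tsum_of_inj i ?_ (fun _ _ => bot_le) (fun q => hi2 q)
        ENNReal.summable
      intro q q' h
      have hr : rank q.1 = rank q'.1 := by rw [hi1 q, hi1 q', h]
      exact Subtype.ext (hrank_inj hr)
    calc μ (Subtype.val '' {p : ↥P | Even (rank p)})
        ≤ μ (Subtype.val '' {p : ↥P | Even (rank p) ∧ rank p = 0}) +
          μ (Subtype.val '' {p : ↥P | Even (rank p) ∧ rank p ≠ 0}) := by
          rw [hsplit]; exact measure_union_le _ _
      _ ≤ s + μ (Subtype.val '' {p : ↥P | ¬ Even (rank p)}) := add_le_add hzero hposle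
      _ = μ (Subtype.val '' {p : ↥P | ¬ Even (rank p)}) + s := add_comm _ _

end Aux

section MainProof

open Set Function

variable {n : ℕ}

lemma QCube.measurableSet_pts (Q : QCube n) : MeasurableSet Q.pts := by
  have heq : Q.pts = ⋂ i, ((fun x : EuclideanSpace ℝ (Fin n) => x i) ⁻¹'
      (Set.Ico (Q.a i) (Q.a i + Q.l))) := by
    ext x
    simp [QCube.pts, Set.mem_iInter, Set.mem_Ico]
  rw [heq]
  refine MeasurableSet.iInter fun i => ?_
  have hmi : Measurable fun x : EuclideanSpace ℝ (Fin n) => x i :=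
    (EuclideanSpace.proj (𝕜 := ℝ) i).continuous.measurable
  exact hmi measurableSet_Ico

lemma QCube.isBounded_pts (Q : QCube n) : Bornology.IsBounded Q.pts := by
  rw [Metric.isBounded_iff]
  refine ⟨Real.sqrt (∑ _i : Fin n, Q.l ^ 2), fun x hx y hy => ?_⟩
  rw [EuclideanSpace.dist_eq]
  apply Real.sqrt_le_sqrt
  refine Finset.sum_le_sum fun i _ => ?_
  have hxi := hx i
  have hyi := hy i
  have hd : dist (x i) (y i) ≤ Q.l := by
    have h := Real.dist_le_of_mem_Icc (x := x i) (y := y i) (x' := Q.a i) (y' := Q.a i + Q.l)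
      ⟨hxi.1, le_of_lt hxi.2⟩ ⟨hyi.1, le_of_lt hyi.2⟩
    linarith
  exact pow_le_pow_left₀ dist_nonneg hd 2

end MainProof

theorem statement1 (n : ℕ) (α L : ℝ) (hα0 : 0 ≤ α) (hαn : α < n) (hL : 0 < L)
    (Om OmInv : EuclideanSpace ℝ (Fin n) → EuclideanSpace ℝ (Fin n))
    (hinv : Function.LeftInverse OmInv Om) (hinv' : Function.RightInverse OmInv Om)
    (hlip : LipschitzWith (Real.toNNReal L) Om)
    (hlip' : LipschitzWith (Real.toNNReal L) OmInv)
    (Nrm : Measure (EuclideanSpace ℝ (Fin n)) → Measure (EuclideanSpace ℝ (Fin n)) → ℝ≥0∞)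
    (hmono : ∀ σ' ω' σ ω, σ' ≤ σ → ω' ≤ ω → Nrm σ' ω' ≤ Nrm σ ω)
    (C₀ : ℝ) (hC₀ : 0 < C₀)
    (hA2 : ∀ σ' ω' : Measure (EuclideanSpace ℝ (Fin n)),
      IsLocallyFiniteMeasure σ' → IsLocallyFiniteMeasure ω' →
      commonAtoms σ' ω' = ∅ →
      (A2classical n α Om σ' ω') ^ (1 / 2 : ℝ) ≤ ENNReal.ofReal C₀ * Nrm σ' ω') :
    ∀ σ ω : Measure (EuclideanSpace ℝ (Fin n)),
      IsLocallyFiniteMeasure σ → IsLocallyFiniteMeasure ω →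
      A2punct n α Om σ ω + A2punctStar n α Om σ ω
        ≤ ENNReal.ofReal (8 * C₀ ^ 2) * (Nrm σ ω) ^ 2 := by
  intro σ ω hσ hω
  set K : ℝ≥0∞ := (ENNReal.ofReal C₀ * Nrm σ ω) ^ 2 with hKdef
  -- squared form of the hypothesis, with monotonicity
  have hsq : ∀ σ' ω' : Measure (EuclideanSpace ℝ (Fin n)),
      IsLocallyFiniteMeasure σ' → IsLocallyFiniteMeasure ω' → σ' ≤ σ → ω' ≤ ω →
      commonAtoms σ' ω' = ∅ → A2classical n α Om σ' ω' ≤ K := by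
    intro σ' ω' h1 h2 hle1 hle2 hca
    have h := hA2 σ' ω' h1 h2 hca
    have h2' : (A2classical n α Om σ' ω' ^ (1 / 2 : ℝ)) ^ (2 : ℝ) ≤
        (ENNReal.ofReal C₀ * Nrm σ' ω') ^ (2 : ℝ) := ENNReal.rpow_le_rpow h (by norm_num)
    rw [← ENNReal.rpow_mul] at h2'
    have hhalf : (1 / 2 : ℝ) * 2 = 1 := by norm_num
    rw [hhalf, ENNReal.rpow_one] at h2'
    have hN : Nrm σ' ω' ≤ Nrm σ ω := hmono _ _ _ _ hle1 hle2
    calc A2classical n α Om σ' ω' ≤ (ENNReal.ofReal C₀ * Nrm σ' ω') ^ (2 : ℝ) := h2'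
      _ = (ENNReal.ofReal C₀ * Nrm σ' ω') ^ (2 : ℕ) := by
          rw [← ENNReal.rpow_natCast]; norm_num
      _ ≤ K := by
          rw [hKdef, pow_two, pow_two]
          exact mul_le_mul' (mul_le_mul' le_rfl hN) (mul_le_mul' le_rfl hN)
  -- the key per-pair estimate
  have key : ∀ a b : Measure (EuclideanSpace ℝ (Fin n)),
      IsLocallyFiniteMeasure a → IsLocallyFiniteMeasure b →
      (∀ a' b' : Measure (EuclideanSpace ℝ (Fin n)),
        IsLocallyFiniteMeasure a' → IsLocallyFiniteMeasure b' → a' ≤ a → b' ≤ b →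
        commonAtoms a' b' = ∅ → A2classical n α Om a' b' ≤ K) →
      A2punct n α Om a b ≤ 4 * K := by
    intro a b ha hb H
    haveI := ha
    haveI := hb
    simp only [A2punct]
    refine iSup_le fun Q => iSup_le fun hQl => ?_
    set G : Set (EuclideanSpace ℝ (Fin n)) := Om '' Q.pts with hGdef
    have hGeq : G = OmInv ⁻¹' Q.pts := by
      ext x
      constructor
      · rintro ⟨y, hy, rfl⟩
        rw [Set.mem_preimage, hinv y]; exact hy
      · intro hx
        exact ⟨OmInv x, hx, hinv' x⟩
    have hGm : MeasurableSet G := by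
      rw [hGeq]
      exact hlip'.continuous.measurable Q.measurableSet_pts
    have hGb : Bornology.IsBounded G := hlip.isBounded_image Q.isBounded_pts
    have hbG : b G ≠ ∞ := hGb.measure_lt_top.ne
    have haG : a G ≠ ∞ := hGb.measure_lt_top.ne
    set P : Set (EuclideanSpace ℝ (Fin n)) := commonAtoms a b with hPdef
    set PG : Set (EuclideanSpace ℝ (Fin n)) := G ∩ P with hPGdef
    have hPGsubG : PG ⊆ G := Set.inter_subset_left
    have hPGsubP : PG ⊆ P := Set.inter_subset_right
    -- countability of the common atoms inside G
    have hPGc : PG.Countable := by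
      have hc0 : {x : EuclideanSpace ℝ (Fin n) | 0 < b ({x} ∩ G)}.Countable := by
        apply MeasureTheory.Measure.countable_meas_pos_of_disjoint_of_meas_iUnion_ne_top b
          (As := fun x => {x} ∩ G)
        · exact fun x => (measurableSet_singleton x).inter hGm
        · intro x y hxy
          simp only [Function.onFun]
          rw [Set.disjoint_left]
          rintro q ⟨hq1, _⟩ ⟨hq2, _⟩
          exact hxy (hq1.symm.trans hq2)
        · have hU : (⋃ x, ({x} : Set (EuclideanSpace ℝ (Fin n))) ∩ G) = G := by
            ext q
            simp only [Set.mem_iUnion, Set.mem_inter_iff, Set.mem_singleton_iff]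
            exact ⟨fun ⟨x, hx1, hx2⟩ => hx2, fun hq => ⟨q, rfl, hq⟩⟩
          rw [hU]; exact hbG
      refine hc0.mono fun p hp => ?_
      have hpe : ({p} : Set (EuclideanSpace ℝ (Fin n))) ∩ G = {p} :=
        Set.inter_eq_self_of_subset_left (Set.singleton_subset_iff.2 (hPGsubG hp))
      simp only [Set.mem_setOf_eq, hpe]
      exact pos_iff_ne_zero.2 (hPGsubP hp).2
    set s : ℝ≥0∞ := ⨆ p ∈ PG, b {p} with hsdef
    have hsb : ∀ p ∈ PG, b {p} ≤ s := by
      intro p hp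
      rw [hsdef]
      exact le_biSup (fun p => b {p}) hp
    have hPGfin : b PG ≠ ∞ := ne_top_of_le_ne_top hbG (measure_mono hPGsubG)
    have hPGpos : ∀ p ∈ PG, b {p} ≠ 0 := fun p hp => (hPGsubP hp).2
    obtain ⟨E, O, hEPG, hOPG, hcov, hdisj, h1, h2⟩ := split_lemma b PG hPGc hPGfin hPGpos hsb
    have hEG : E ⊆ G := fun x hx => hPGsubG (hEPG hx)
    have hOG : O ⊆ G := fun x hx => hPGsubG (hOPG hx)
    have hEP : E ⊆ P := fun x hx => hPGsubP (hEPG hx)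
    have hOP : O ⊆ P := fun x hx => hPGsubP (hOPG hx)
    have hOGE : O ⊆ G \ E := fun x hx => ⟨hOG hx, fun hxE => Set.disjoint_left.1 hdisj hxE hx⟩
    have hEGO : E ⊆ G \ O := fun x hx => ⟨hEG hx, Set.disjoint_left.1 hdisj hx⟩
    -- set identities for the restricted measures
    have hset1 : G \ (P \ O) = G \ E := by
      ext x
      simp only [Set.mem_diff]
      constructor
      · rintro ⟨hxG, hxPO⟩
        refine ⟨hxG, fun hxE => ?_⟩
        exact hxPO ⟨hEP hxE, fun hxO => Set.disjoint_left.1 hdisj hxE hxO⟩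
      · rintro ⟨hxG, hxE⟩
        refine ⟨hxG, fun hxPO => ?_⟩
        rcases hcov ⟨hxG, hxPO.1⟩ with h | h
        · exact hxE h
        · exact hxPO.2 h
    have hset2 : G \ (P \ E) = G \ O := by
      ext x
      simp only [Set.mem_diff]
      constructor
      · rintro ⟨hxG, hxPE⟩
        refine ⟨hxG, fun hxO => ?_⟩
        exact hxPE ⟨hOP hxO, fun hxE => Set.disjoint_left.1 hdisj hxE hxO⟩
      · rintro ⟨hxG, hxO⟩
        refine ⟨hxG, fun hxPE => ?_⟩
        rcases hcov ⟨hxG, hxPE.1⟩ with h | h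
        · exact hxPE.2 h
        · exact hxO h
    -- computations of restricted measures on G
    have hrw : ∀ (μ' : Measure (EuclideanSpace ℝ (Fin n))) (t : Set (EuclideanSpace ℝ (Fin n))),
        (μ'.restrict tᶜ) G = μ' (G \ t) := by
      intro μ' t
      rw [Measure.restrict_apply hGm, ← Set.diff_eq]
    -- no common atoms for the reduced pairs
    have hsingInt : ∀ (t : Set (EuclideanSpace ℝ (Fin n))) (p : EuclideanSpace ℝ (Fin n)),
        p ∈ t → ({p} : Set (EuclideanSpace ℝ (Fin n))) ∩ tᶜ = ∅ := by
      intro t p hp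
      ext q
      simp only [Set.mem_inter_iff, Set.mem_singleton_iff, Set.mem_compl_iff,
        Set.mem_empty_iff_false, iff_false, not_and]
      rintro rfl
      exact fun hq => hq hp
    have hcaGen : ∀ S : Set (EuclideanSpace ℝ (Fin n)), S ⊆ P →
        commonAtoms (a.restrict Sᶜ) (b.restrict (P \ S)ᶜ) = ∅ := by
      intro S hSP
      rw [Set.eq_empty_iff_forall_notMem]
      rintro p ⟨hp1, hp2⟩
      rw [Measure.restrict_apply (measurableSet_singleton p)] at hp1 hp2
      have hpa : a {p} ≠ 0 := fun h =>
        hp1 (le_antisymm (h ▸ measure_mono Set.inter_subset_left) zero_le)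
      have hpb : b {p} ≠ 0 := fun h =>
        hp2 (le_antisymm (h ▸ measure_mono Set.inter_subset_left) zero_le)
      have hpP : p ∈ P := ⟨hpa, hpb⟩
      by_cases hpS : p ∈ S
      · rw [hsingInt S p hpS] at hp1
        exact hp1 measure_empty
      · rw [hsingInt (P \ S) p ⟨hpP, hpS⟩] at hp2
        exact hp2 measure_empty
    -- the main numeric estimates
    have hsplitbE : b G ≤ b (G \ E) + b E := by
      calc b G = b ((G \ E) ∪ E) := by rw [Set.diff_union_of_subset hEG]
        _ ≤ b (G \ E) + b E := measure_union_le _ _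
    have hsplitbO : b G ≤ b (G \ O) + b O := by
      calc b G = b ((G \ O) ∪ O) := by rw [Set.diff_union_of_subset hOG]
        _ ≤ b (G \ O) + b O := measure_union_le _ _
    have hsplitaO : a G ≤ a (G \ O) + a (G \ E) := by
      calc a G = a ((G \ O) ∪ O) := by rw [Set.diff_union_of_subset hOG]
        _ ≤ a (G \ O) + a O := measure_union_le _ _
        _ ≤ a (G \ O) + a (G \ E) := add_le_add_right (measure_mono hOGE) _
    have hpunct1 : punctMass a b b G ≤ 2 * b (G \ E) := by
      simp only [punctMass]
      rw [tsub_le_iff_right]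
      calc b G ≤ b (G \ E) + b E := hsplitbE
        _ ≤ b (G \ E) + (b O + s) := add_le_add_right h2 _
        _ ≤ b (G \ E) + (b (G \ E) + s) :=
            add_le_add_right (add_le_add_left (measure_mono hOGE) _) _
        _ = 2 * b (G \ E) + s := by ring
    have hpunct2 : punctMass a b b G ≤ 2 * b (G \ O) := by
      refine le_trans tsub_le_self ?_
      calc b G ≤ b (G \ O) + b O := hsplitbO
        _ ≤ b (G \ O) + b E := add_le_add_right h1 _
        _ ≤ b (G \ O) + b (G \ O) := add_le_add_right (measure_mono hEGO) _
        _ = 2 * b (G \ O) := (two_mul _).symm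
    have hprod : punctMass a b b G * a G ≤
        2 * (b (G \ E) * a (G \ O)) + 2 * (b (G \ O) * a (G \ E)) := by
      calc punctMass a b b G * a G
          ≤ punctMass a b b G * (a (G \ O) + a (G \ E)) := mul_le_mul' le_rfl hsplitaO
        _ = punctMass a b b G * a (G \ O) + punctMass a b b G * a (G \ E) := mul_add _ _ _
        _ ≤ (2 * b (G \ E)) * a (G \ O) + (2 * b (G \ O)) * a (G \ E) :=
            add_le_add (mul_le_mul' hpunct1 le_rfl) (mul_le_mul' hpunct2 le_rfl)
        _ = 2 * (b (G \ E) * a (G \ O)) + 2 * (b (G \ O) * a (G \ E)) := by ring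
    -- the final division step, given a suitable reduced pair
    have hdivle : ∀ a' b' : Measure (EuclideanSpace ℝ (Fin n)), a' ≤ a → b' ≤ b →
        commonAtoms a' b' = ∅ →
        punctMass a b b G * a G ≤ 4 * (a' G * b' G) →
        punctMass a b b G * a G / (volume G) ^ (2 * (1 - α / (n : ℝ))) ≤ 4 * K := by
      intro a' b' hle1 hle2 hca hnum
      have hlf1 : IsLocallyFiniteMeasure a' := Measure.isLocallyFiniteMeasure_of_le hle1
      have hlf2 : IsLocallyFiniteMeasure b' := Measure.isLocallyFiniteMeasure_of_le hle2
      have hterm : a' G * b' G / (volume G) ^ (2 * (1 - α / (n : ℝ)))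
          ≤ A2classical n α Om a' b' := by
        simp only [A2classical]
        exact le_iSup₂_of_le Q hQl le_rfl
      calc punctMass a b b G * a G / (volume G) ^ (2 * (1 - α / (n : ℝ)))
          ≤ 4 * (a' G * b' G) / (volume G) ^ (2 * (1 - α / (n : ℝ))) :=
            ENNReal.div_le_div_right hnum _
        _ = 4 * (a' G * b' G / (volume G) ^ (2 * (1 - α / (n : ℝ)))) := by
            rw [mul_div_assoc]
        _ ≤ 4 * A2classical n α Om a' b' := mul_le_mul' le_rfl hterm
        _ ≤ 4 * K := mul_le_mul' le_rfl (H a' b' hlf1 hlf2 hle1 hle2 hca)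
    rcases le_total (b (G \ E) * a (G \ O)) (b (G \ O) * a (G \ E)) with hc | hc
    · -- use the pair (a restricted off E, b restricted off P \ E)
      refine hdivle (a.restrict Eᶜ) (b.restrict (P \ E)ᶜ)
        Measure.restrict_le_self Measure.restrict_le_self (hcaGen E hEP) ?_
      rw [hrw a E, hrw b (P \ E), hset2]
      calc punctMass a b b G * a G
          ≤ 2 * (b (G \ E) * a (G \ O)) + 2 * (b (G \ O) * a (G \ E)) := hprod
        _ ≤ 2 * (b (G \ O) * a (G \ E)) + 2 * (b (G \ O) * a (G \ E)) :=
            add_le_add_left (mul_le_mul' le_rfl hc) _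
        _ = 4 * (a (G \ E) * b (G \ O)) := by ring
    · -- use the pair (a restricted off O, b restricted off P \ O)
      refine hdivle (a.restrict Oᶜ) (b.restrict (P \ O)ᶜ)
        Measure.restrict_le_self Measure.restrict_le_self (hcaGen O hOP) ?_
      rw [hrw a O, hrw b (P \ O), hset1]
      calc punctMass a b b G * a G
          ≤ 2 * (b (G \ E) * a (G \ O)) + 2 * (b (G \ O) * a (G \ E)) := hprod
        _ ≤ 2 * (b (G \ E) * a (G \ O)) + 2 * (b (G \ E) * a (G \ O)) :=
            add_le_add_right (mul_le_mul' le_rfl hc) _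
        _ = 4 * (a (G \ O) * b (G \ E)) := by ring
  -- conclude for both punctured constants
  have hp1 : A2punct n α Om σ ω ≤ 4 * K :=
    key σ ω hσ hω fun a' b' l1 l2 h1 h2 hca => hsq a' b' l1 l2 h1 h2 hca
  have hstar_eq : A2punctStar n α Om σ ω = A2punct n α Om ω σ := by
    have hcomm : commonAtoms σ ω = commonAtoms ω σ := by
      ext p; exact and_comm
    simp only [A2punctStar, A2punct, punctMass, hcomm]
  have hp2 : A2punct n α Om ω σ ≤ 4 * K := by
    refine key ω σ hω hσ fun a' b' l1 l2 h1 h2 hca => ?_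
    have hca' : commonAtoms b' a' = ∅ := by
      rw [Set.eq_empty_iff_forall_notMem]
      intro p hp
      have : p ∈ commonAtoms a' b' := ⟨hp.2, hp.1⟩
      rw [hca] at this
      exact this
    have hcomm : A2classical n α Om a' b' = A2classical n α Om b' a' := by
      simp only [A2classical]
      exact iSup_congr fun Q => iSup_congr fun _ => by rw [mul_comm (a' _) (b' _)]
    rw [hcomm]
    exact hsq b' a' l2 l1 h2 h1 hca'
  have hKfin : ENNReal.ofReal (8 * C₀ ^ 2) = 8 * (ENNReal.ofReal C₀) ^ 2 := by
    rw [ENNReal.ofReal_mul (by norm_num : (0:ℝ) ≤ 8), ENNReal.ofReal_pow hC₀.le]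
    norm_num
  calc A2punct n α Om σ ω + A2punctStar n α Om σ ω
      ≤ 4 * K + 4 * K := by rw [hstar_eq]; exact add_le_add hp1 hp2
    _ = 8 * K := by ring
    _ = ENNReal.ofReal (8 * C₀ ^ 2) * (Nrm σ ω) ^ 2 := by
        rw [hKdef, hKfin, mul_pow]; ring
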